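/- Let v₁, v₂ ∈ ℝ³ be linearly independent and let w₁, w₂ ∈ ℝ³ satisfy vᵢ·wⱼ + vⱼ·wᵢ = 0 for all i, j ∈ {1,2}. Then there exists a unique vector Ω ∈ ℝ³ such that wᵢ = Ω × vᵢ for i = 1, 2, where × denotes the cross product in ℝ³. -/

import Mathlib

open Matrix

private lemma aux_p (a b p q : Fin 3 → ℝ) :
    ((a ⨯₃ b) ⬝ᵥ (a ⨯₃ b)) • p
      = ((q ⬝ᵥ (a ⨯₃ b)) • a - (p ⬝ᵥ (a ⨯₃ b)) • b + (p ⬝ᵥ b) • (a ⨯₃ b)) ⨯₃ a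
        + (a ⬝ᵥ p) • ((b ⬝ᵥ b) • a - (a ⬝ᵥ b) • b) := by
  funext k
  fin_cases k <;>
    simp [cross_apply, dotProduct, Fin.sum_univ_three, Matrix.vecHead, Matrix.vecTail,
      Pi.smul_apply, smul_eq_mul] <;> ring

private lemma aux_q (a b p q : Fin 3 → ℝ) :
    ((a ⨯₃ b) ⬝ᵥ (a ⨯₃ b)) • q
      = ((q ⬝ᵥ (a ⨯₃ b)) • a - (p ⬝ᵥ (a ⨯₃ b)) • b + (p ⬝ᵥ b) • (a ⨯₃ b)) ⨯₃ b
        - (a ⬝ᵥ q + b ⬝ᵥ p) • ((a ⨯₃ b) ⨯₃ b)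
        + (b ⬝ᵥ q) • ((a ⬝ᵥ a) • b - (a ⬝ᵥ b) • a) := by
  funext k
  fin_cases k <;>
    simp [cross_apply, dotProduct, Fin.sum_univ_three, Matrix.vecHead, Matrix.vecTail,
      Pi.smul_apply, smul_eq_mul] <;> ring

private lemma aux_u (a u : Fin 3 → ℝ) :
    a ⨯₃ (u ⨯₃ a) = (a ⬝ᵥ a) • u - (a ⬝ᵥ u) • a := by
  funext k
  fin_cases k <;>
    simp [cross_apply, dotProduct, Fin.sum_univ_three, Matrix.vecHead, Matrix.vecTail,
      Pi.smul_apply, smul_eq_mul] <;> ring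

/-- If `v 0, v 1 ∈ ℝ³` are linearly independent and `w 0, w 1 ∈ ℝ³` satisfy
`vᵢ·wⱼ + vⱼ·wᵢ = 0` for all `i, j`, then there is a unique `Ω ∈ ℝ³` with `wᵢ = Ω × vᵢ`. -/
theorem exists_unique_bending_field_pointwise
    (v w : Fin 2 → Fin 3 → ℝ)
    (hv : LinearIndependent ℝ v)
    (hw : ∀ i j : Fin 2, v i ⬝ᵥ w j + v j ⬝ᵥ w i = 0) :
    ∃! Ω : Fin 3 → ℝ, ∀ i : Fin 2, w i = Ω ⨯₃ v i := by
  have hveq : ![v 0, v 1] = v := by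
    funext i; fin_cases i <;> rfl
  have hn : v 0 ⨯₃ v 1 ≠ 0 := by
    rw [crossProduct_ne_zero_iff_linearIndependent, hveq]; exact hv
  set n : Fin 3 → ℝ := v 0 ⨯₃ v 1 with hn_def
  set d : ℝ := n ⬝ᵥ n with hd_def
  have hd : d ≠ 0 := fun h => hn (dotProduct_self_eq_zero.mp h)
  have C1 : v 0 ⬝ᵥ w 0 = 0 := by have := hw 0 0; linarith
  have C2 : v 1 ⬝ᵥ w 1 = 0 := by have := hw 1 1; linarith
  have C3 : v 0 ⬝ᵥ w 1 + v 1 ⬝ᵥ w 0 = 0 := hw 0 1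
  set S : Fin 3 → ℝ := (w 1 ⬝ᵥ n) • v 0 - (w 0 ⬝ᵥ n) • v 1 + (w 0 ⬝ᵥ v 1) • n with hS_def
  refine ⟨d⁻¹ • S, ?_, ?_⟩
  · intro i
    fin_cases i
    · have h := aux_p (v 0) (v 1) (w 0) (w 1)
      rw [C1, zero_smul, add_zero] at h
      calc w 0 = d⁻¹ • (d • w 0) := by
              rw [smul_smul, inv_mul_cancel₀ hd, one_smul]
        _ = d⁻¹ • (S ⨯₃ v 0) := by rw [hd_def, hn_def, h]
        _ = (d⁻¹ • S) ⨯₃ v 0 := (LinearMap.map_smul₂ crossProduct d⁻¹ S (v 0)).symm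
    · have h := aux_q (v 0) (v 1) (w 0) (w 1)
      rw [C2, C3, zero_smul, zero_smul, sub_zero, add_zero] at h
      calc w 1 = d⁻¹ • (d • w 1) := by
              rw [smul_smul, inv_mul_cancel₀ hd, one_smul]
        _ = d⁻¹ • (S ⨯₃ v 1) := by rw [hd_def, hn_def, h]
        _ = (d⁻¹ • S) ⨯₃ v 1 := (LinearMap.map_smul₂ crossProduct d⁻¹ S (v 1)).symm
  · intro y hy
    have h0 : w 0 = (d⁻¹ • S) ⨯₃ v 0 := by
      have h := aux_p (v 0) (v 1) (w 0) (w 1)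
      rw [C1, zero_smul, add_zero] at h
      calc w 0 = d⁻¹ • (d • w 0) := by
              rw [smul_smul, inv_mul_cancel₀ hd, one_smul]
        _ = d⁻¹ • (S ⨯₃ v 0) := by rw [hd_def, hn_def, h]
        _ = (d⁻¹ • S) ⨯₃ v 0 := (LinearMap.map_smul₂ crossProduct d⁻¹ S (v 0)).symm
    have h1 : w 1 = (d⁻¹ • S) ⨯₃ v 1 := by
      have h := aux_q (v 0) (v 1) (w 0) (w 1)
      rw [C2, C3, zero_smul, zero_smul, sub_zero, add_zero] at h
      calc w 1 = d⁻¹ • (d • w 1) := by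
              rw [smul_smul, inv_mul_cancel₀ hd, one_smul]
        _ = d⁻¹ • (S ⨯₃ v 1) := by rw [hd_def, hn_def, h]
        _ = (d⁻¹ • S) ⨯₃ v 1 := (LinearMap.map_smul₂ crossProduct d⁻¹ S (v 1)).symm
    set Ω : Fin 3 → ℝ := d⁻¹ • S with hΩ_def
    set u : Fin 3 → ℝ := y - Ω with hu_def
    have hu0 : u ⨯₃ v 0 = 0 := by
      have : u ⨯₃ v 0 = y ⨯₃ v 0 - Ω ⨯₃ v 0 := by
        rw [hu_def, map_sub crossProduct y Ω, LinearMap.sub_apply]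
      rw [this, ← hy 0, ← h0, sub_self]
    have hu1 : u ⨯₃ v 1 = 0 := by
      have : u ⨯₃ v 1 = y ⨯₃ v 1 - Ω ⨯₃ v 1 := by
        rw [hu_def, map_sub crossProduct y Ω, LinearMap.sub_apply]
      rw [this, ← hy 1, ← h1, sub_self]
    have hv0 : v 0 ≠ 0 := hv.ne_zero 0
    have ha : v 0 ⬝ᵥ v 0 ≠ 0 := fun h => hv0 (dotProduct_self_eq_zero.mp h)
    have key : (v 0 ⬝ᵥ v 0) • u = (v 0 ⬝ᵥ u) • v 0 := by
      have h2 := aux_u (v 0) u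
      rw [hu0, map_zero] at h2
      have := h2.symm
      rwa [sub_eq_zero] at this
    have h3 : (v 0 ⬝ᵥ u) • n = 0 := by
      have : ((v 0 ⬝ᵥ v 0) • u) ⨯₃ v 1 = ((v 0 ⬝ᵥ u) • v 0) ⨯₃ v 1 := by rw [key]
      rw [LinearMap.map_smul₂ crossProduct _ u (v 1), LinearMap.map_smul₂ crossProduct _ (v 0) (v 1), hu1,
        smul_zero] at this
      exact this.symm
    have h4 : v 0 ⬝ᵥ u = 0 := by
      rcases smul_eq_zero.mp h3 with h | h
      · exact h
      · exact absurd h hn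
    have h5 : u = 0 := by
      have := key
      rw [h4, zero_smul] at this
      rcases smul_eq_zero.mp this with h | h
      · exact absurd h ha
      · exact h
    rw [hu_def] at h5
    exact sub_eq_zero.mp h5
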